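/- (Theorem 3.2, existence and uniqueness for the discretized generalized PB system.) Let n ≥ 1, let A be a symmetric positive definite real n × n matrix, let b ∈ ℝⁿ, and for each index m let g_m : ℝ → ℝ be a continuous, monotone nonincreasing (antitone) function that is bounded (there exists C with |g_m(s)| ≤ C for all s ∈ ℝ). Then there exists a unique ψ ∈ ℝⁿ such that (Aψ)_m = g_m(ψ_m) + b_m for every m = 1,…,n. -/

import Mathlib

open scoped BigOperators

lemma PB_quad_lower (n : ℕ) (hn : 1 ≤ n) (A : Matrix (Fin n) (Fin n) ℝ) (hA : A.PosDef) :
    ∃ lam : ℝ, 0 < lam ∧ ∀ x : Fin n → ℝ, lam * ‖x‖ ^ 2 ≤ dotProduct x (A.mulVec x) := by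
  have hq : Continuous fun x : Fin n → ℝ => dotProduct x (A.mulVec x) := by
    unfold dotProduct Matrix.mulVec
    exact continuous_finset_sum _ fun i _ => (continuous_apply i).mul
      (continuous_finset_sum _ fun j _ => (continuous_const.mul (continuous_apply j)))
  have hne : (Metric.sphere (0 : Fin n → ℝ) 1).Nonempty := by
    refine ⟨fun _ => 1, ?_⟩
    have : Nonempty (Fin n) := ⟨⟨0, hn⟩⟩
    have : Nonempty (Fin n) := ⟨⟨0, hn⟩⟩
    simp [Metric.mem_sphere, pi_norm_const]
  obtain ⟨u, hu, humin⟩ := (isCompact_sphere (0 : Fin n → ℝ) 1).exists_isMinOn hne hq.continuousOn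
  have hu1 : ‖u‖ = 1 := by simpa using hu
  have hune : u ≠ 0 := by intro h; rw [h] at hu1; simp at hu1
  have hlam : 0 < dotProduct u (A.mulVec u) := by
    have := hA.dotProduct_mulVec_pos hune
    simpa using this
  refine ⟨_, hlam, fun x => ?_⟩
  rcases eq_or_ne x 0 with rfl | hx
  · simp
  · have hr : 0 < ‖x‖ := norm_pos_iff.mpr hx
    set u' : Fin n → ℝ := ‖x‖⁻¹ • x with hu'
    have hu's : u' ∈ Metric.sphere (0 : Fin n → ℝ) 1 := by
      simp [hu', norm_smul, abs_of_pos (inv_pos.mpr hr), inv_mul_cancel₀ hr.ne']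
    have hmin := humin hu's
    have hxu : x = ‖x‖ • u' := by
      rw [hu', smul_smul, mul_inv_cancel₀ hr.ne', one_smul]
    have hexp : dotProduct x (A.mulVec x)
        = ‖x‖ ^ 2 * dotProduct u' (A.mulVec u') := by
      conv_lhs => rw [hxu]
      rw [smul_dotProduct, Matrix.mulVec_smul, dotProduct_smul,
        smul_eq_mul, smul_eq_mul]
      ring
    rw [hexp]
    have : dotProduct u (A.mulVec u) ≤ dotProduct u' (A.mulVec u') := hmin
    nlinarith [sq_nonneg ‖x‖]

lemma PB_unique (n : ℕ) (A : Matrix (Fin n) (Fin n) ℝ) (hA : A.PosDef)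
    (b : Fin n → ℝ) (g : Fin n → ℝ → ℝ) (hanti : ∀ m, Antitone (g m))
    (ψ₁ ψ₂ : Fin n → ℝ)
    (h1 : ∀ m, A.mulVec ψ₁ m = g m (ψ₁ m) + b m)
    (h2 : ∀ m, A.mulVec ψ₂ m = g m (ψ₂ m) + b m) : ψ₁ = ψ₂ := by
  by_contra hne
  have hd : ψ₁ - ψ₂ ≠ 0 := sub_ne_zero.mpr hne
  have hpos : 0 < dotProduct (ψ₁ - ψ₂) (A.mulVec (ψ₁ - ψ₂)) := by
    have := hA.dotProduct_mulVec_pos hd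
    simpa using this
  have hnonpos : dotProduct (ψ₁ - ψ₂) (A.mulVec (ψ₁ - ψ₂)) ≤ 0 := by
    rw [Matrix.mulVec_sub]
    unfold dotProduct
    refine Finset.sum_nonpos fun m _ => ?_
    have hm : (A.mulVec ψ₁ - A.mulVec ψ₂) m = g m (ψ₁ m) - g m (ψ₂ m) := by
      simp [h1 m, h2 m]
    rw [hm]
    rcases le_total (ψ₁ m) (ψ₂ m) with h | h
    · exact mul_nonpos_of_nonpos_of_nonneg (by simpa using sub_nonpos.mpr h)
        (sub_nonneg.mpr (hanti m h))
    · exact mul_nonpos_of_nonneg_of_nonpos (by simpa using sub_nonneg.mpr h)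
        (sub_nonpos.mpr (hanti m h))
  exact absurd hpos (not_lt.mpr hnonpos)

lemma PB_exists (n : ℕ) (hn : 1 ≤ n) (A : Matrix (Fin n) (Fin n) ℝ) (hA : A.PosDef)
    (b : Fin n → ℝ) (g : Fin n → ℝ → ℝ)
    (hcont : ∀ m, Continuous (g m))
    (hbdd : ∀ m, ∃ C : ℝ, ∀ s : ℝ, |g m s| ≤ C) :
    ∃ ψ : Fin n → ℝ, ∀ m, A.mulVec ψ m = g m (ψ m) + b m := by
  classical
  obtain ⟨lam, hlam, hquad⟩ := PB_quad_lower n hn A hA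
  choose C hC using hbdd
  -- primitives
  set P : Fin n → ℝ → ℝ := fun m x => ∫ s in (0:ℝ)..x, g m s with hPdef
  have hP : ∀ m x, HasDerivAt (P m) (g m x) x := fun m x =>
    ((hcont m).integral_hasStrictDerivAt 0 x).hasDerivAt
  have hPcont : ∀ m, Continuous (P m) := fun m =>
    continuous_iff_continuousAt.mpr fun x => (hP m x).continuousAt
  have hPbound : ∀ m x, |P m x| ≤ C m * |x| := by
    intro m x
    have := intervalIntegral.norm_integral_le_of_norm_le_const
      (a := (0:ℝ)) (b := x) (C := C m) (f := g m) (fun s _ => hC m s)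
    simpa [hPdef] using this
  -- the energy functional
  set f : (Fin n → ℝ) → ℝ := fun ψ =>
    (1/2) * dotProduct ψ (A.mulVec ψ) - (∑ m, P m (ψ m)) - dotProduct b ψ
    with hfdef
  have hfc : Continuous f := by
    apply Continuous.sub
    apply Continuous.sub
    · apply continuous_const.mul
      unfold dotProduct Matrix.mulVec
      exact continuous_finset_sum _ fun i _ => (continuous_apply i).mul
        (continuous_finset_sum _ fun j _ => (continuous_const.mul (continuous_apply j)))
    · exact continuous_finset_sum _ fun m _ => (hPcont m).comp (continuous_apply m)
    · unfold dotProduct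
      exact continuous_finset_sum _ fun i _ => continuous_const.mul (continuous_apply i)
  -- coercivity
  set M : ℝ := (∑ m, C m) + ∑ m, |b m| with hMdef
  have hcoer : ∀ ψ : Fin n → ℝ, (lam/2) * ‖ψ‖^2 - M * ‖ψ‖ ≤ f ψ := by
    intro ψ
    have h1 : |∑ m, P m (ψ m)| ≤ (∑ m, C m) * ‖ψ‖ := by
      calc |∑ m, P m (ψ m)| ≤ ∑ m, |P m (ψ m)| := Finset.abs_sum_le_sum_abs _ _
        _ ≤ ∑ m, C m * ‖ψ‖ := Finset.sum_le_sum fun m _ => by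
            calc |P m (ψ m)| ≤ C m * |ψ m| := hPbound m (ψ m)
              _ ≤ C m * ‖ψ‖ := by
                  have h0 : 0 ≤ C m := le_trans (abs_nonneg _) (hC m 0)
                  have := norm_le_pi_norm ψ m
                  exact mul_le_mul_of_nonneg_left (by simpa [Real.norm_eq_abs] using this) h0
        _ = (∑ m, C m) * ‖ψ‖ := by rw [Finset.sum_mul]
    have h2 : |dotProduct b ψ| ≤ (∑ m, |b m|) * ‖ψ‖ := by
      unfold dotProduct
      calc |∑ m, b m * ψ m| ≤ ∑ m, |b m * ψ m| := Finset.abs_sum_le_sum_abs _ _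
        _ ≤ ∑ m, |b m| * ‖ψ‖ := Finset.sum_le_sum fun m _ => by
            rw [abs_mul]
            exact mul_le_mul_of_nonneg_left
              (by simpa [Real.norm_eq_abs] using norm_le_pi_norm ψ m) (abs_nonneg _)
        _ = (∑ m, |b m|) * ‖ψ‖ := by rw [Finset.sum_mul]
    have h3 := hquad ψ
    rw [hfdef, hMdef]
    have e1 : -((∑ m, C m) * ‖ψ‖) ≤ -(∑ m, P m (ψ m)) := by
      have := (abs_le.mp h1).2; linarith
    have e2 : -((∑ m, |b m|) * ‖ψ‖) ≤ -(dotProduct b ψ) := by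
      have := (abs_le.mp h2).2; linarith
    simp only
    nlinarith
  -- choose radius
  set R : ℝ := max 1 ((2/lam) * (M + |f 0| + 1)) with hRdef
  have hR1 : (1:ℝ) ≤ R := le_max_left _ _
  have hRbig : ∀ ψ : Fin n → ℝ, R ≤ ‖ψ‖ → f 0 < f ψ := by
    intro ψ hψ
    have hcψ := hcoer ψ
    have hr1 : (1:ℝ) ≤ ‖ψ‖ := le_trans hR1 hψ
    have hr2 : (2/lam) * (M + |f 0| + 1) ≤ ‖ψ‖ := le_trans (le_max_right _ _) hψ
    clear_value f M
    have hcore : M + |f 0| + 1 ≤ (lam/2) * ‖ψ‖ := by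
      rw [div_mul_eq_mul_div, div_le_iff₀ hlam] at hr2
      nlinarith
    have habs : f 0 ≤ |f 0| := le_abs_self _
    have hkey : (M + |f 0| + 1) * ‖ψ‖ ≤ lam / 2 * ‖ψ‖ ^ 2 := by
      have := mul_le_mul_of_nonneg_right hcore (norm_nonneg ψ)
      nlinarith
    have hstep : (M + |f 0| + 1) * ‖ψ‖ - M * ‖ψ‖ ≤ f ψ := by nlinarith [hcψ, hkey]
    have hexp : (M + |f 0| + 1) * ‖ψ‖ - M * ‖ψ‖ = |f 0| * ‖ψ‖ + ‖ψ‖ := by ring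
    have h6 : |f 0| * 1 ≤ |f 0| * ‖ψ‖ := mul_le_mul_of_nonneg_left hr1 (abs_nonneg _)
    linarith
  -- minimize over the closed ball
  have hball : IsCompact (Metric.closedBall (0 : Fin n → ℝ) R) := isCompact_closedBall _ _
  obtain ⟨ψ, hψmem, hψmin⟩ := hball.exists_isMinOn
    ⟨0, Metric.mem_closedBall_self (by linarith)⟩ hfc.continuousOn
  have hψ0 : f ψ ≤ f 0 := hψmin (Metric.mem_closedBall_self (by linarith))
  have hψlt : ‖ψ‖ < R := by
    by_contra h
    exact absurd hψ0 (not_le.mpr (hRbig ψ (not_lt.mp h)))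
  have hloc : IsLocalMin f ψ := by
    refine hψmin.isLocalMin ?_
    exact Filter.mem_of_superset
      (Metric.isOpen_ball.mem_nhds (by simpa [Metric.mem_ball] using hψlt))
      Metric.ball_subset_closedBall
  -- symmetry of A
  have hsym : ∀ i j, A i j = A j i := by
    intro i j
    have := congrFun (congrFun hA.1 j) i
    simpa [Matrix.conjTranspose_apply] using this
  refine ⟨ψ, fun m => ?_⟩
  -- one-dimensional variation in direction `Pi.single m 1`
  set e : Fin n → ℝ := Pi.single m 1 with hedef
  set c1 : ℝ := A.mulVec ψ m - dotProduct b e with hc1def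
  set φ : ℝ → ℝ := fun t => f (ψ + t • e) with hφdef
  have hφloc : IsLocalMin φ 0 := by
    have hcont' : ContinuousAt (fun t : ℝ => ψ + t • e) 0 := by
      exact (continuous_const.add (continuous_id.smul continuous_const)).continuousAt
    have h0 : IsLocalMin f ((fun t : ℝ => ψ + t • e) 0) := by simpa using hloc
    exact IsLocalMin.comp_continuous (g := fun t : ℝ => ψ + t • e) (b := (0:ℝ)) h0 hcont'
  have hupdate : ∀ t : ℝ, (ψ + t • e) = Function.update ψ m (ψ m + t) := by
    intro t
    funext k
    by_cases hk : k = m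
    · subst hk; simp [hedef]
    · simp [hedef, Pi.single_apply, hk, Function.update_of_ne hk]
  have hφeq : φ = fun t =>
      (A m m / 2) * t^2 + c1 * t + (f ψ + P m (ψ m)) - P m (ψ m + t) := by
    funext t
    rw [hφdef]
    simp only
    rw [hfdef]
    simp only
    -- expand quadratic part
    have hq : dotProduct (ψ + t • e) (A.mulVec (ψ + t • e))
        = dotProduct ψ (A.mulVec ψ) + 2 * t * A.mulVec ψ m + t^2 * A m m := by
      rw [Matrix.mulVec_add, Matrix.mulVec_smul, add_dotProduct,
        smul_dotProduct, dotProduct_add, dotProduct_smul,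
        dotProduct_add, dotProduct_smul]
      have he1 : dotProduct ψ (A.mulVec e) = A.mulVec ψ m := by
        simp only [hedef, Matrix.mulVec_single, mul_one]
        unfold Matrix.mulVec dotProduct
        refine Finset.sum_congr rfl fun i _ => ?_
        show ψ i * (A i m * 1) = A m i * ψ i
        rw [hsym i m]; ring
      have he2 : dotProduct e (A.mulVec ψ) = A.mulVec ψ m := by
        rw [hedef, single_dotProduct, one_mul]
      have he3 : dotProduct e (A.mulVec e) = A m m := by
        simp [hedef, single_dotProduct, Matrix.mulVec_single]
      rw [he1, he2, he3, smul_eq_mul, smul_eq_mul, smul_eq_mul]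
      ring
    -- expand sum part
    have hs : (∑ k, P k ((ψ + t • e) k)) = (∑ k, P k (ψ k)) + (P m (ψ m + t) - P m (ψ m)) := by
      have : ∀ k, P k ((ψ + t • e) k) = P k (ψ k) +
          (if k = m then P m (ψ m + t) - P m (ψ m) else 0) := by
        intro k
        by_cases hk : k = m
        · subst hk
          rw [hupdate t]
          simp [Function.update_self]
        · rw [hupdate t]
          simp [Function.update_of_ne hk, hk]
      rw [Finset.sum_congr rfl fun k _ => this k, Finset.sum_add_distrib,
        Finset.sum_ite_eq' Finset.univ m (fun _ => P m (ψ m + t) - P m (ψ m))]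
      simp
    -- expand linear part
    have hl : dotProduct b (ψ + t • e) = dotProduct b ψ + t * dotProduct b e := by
      rw [dotProduct_add, dotProduct_smul, smul_eq_mul]
    rw [hq, hs, hl, hc1def]
    ring
  have hderiv : HasDerivAt φ (c1 - g m (ψ m)) 0 := by
    rw [hφeq]
    have hpoly : HasDerivAt (fun t : ℝ => (A m m / 2) * t^2 + c1 * t + (f ψ + P m (ψ m)))
        ((A m m / 2) * (2 * 0^1) + c1 * 1) 0 := by
      exact (((hasDerivAt_pow 2 (0:ℝ)).const_mul (A m m / 2)).add
        ((hasDerivAt_id (0:ℝ)).const_mul c1)).add_const _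
    have hprim : HasDerivAt (fun t : ℝ => P m (ψ m + t)) (g m (ψ m)) 0 := by
      have h1 : HasDerivAt (fun t : ℝ => ψ m + t) 1 0 := by
        simpa using (hasDerivAt_id' (0:ℝ)).const_add (ψ m)
      have h2 : HasDerivAt (P m) (g m (ψ m + 0)) (ψ m + 0) := hP m (ψ m + 0)
      have := HasDerivAt.comp (0:ℝ) h2 h1
      simpa [Function.comp_def] using this
    have := hpoly.sub hprim
    exact this.congr_deriv (by norm_num)
  have hz : c1 - g m (ψ m) = 0 := hφloc.hasDerivAt_eq_zero hderiv
  have hbe : dotProduct b e = b m := by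
    rw [hedef, dotProduct_single, mul_one]
  rw [hc1def, hbe] at hz
  linarith

/-- Theorem 3.2: if `A` is symmetric positive definite and each
`g_m : ℝ → ℝ` is continuous, nonincreasing and bounded, then there exists a unique
`ψ ∈ ℝⁿ` with `(Aψ)_m = g_m(ψ_m) + b_m` for every `m`. -/
theorem discrete_PB_exists_unique
    (n : ℕ) (hn : 1 ≤ n) (A : Matrix (Fin n) (Fin n) ℝ) (hA : A.PosDef)
    (b : Fin n → ℝ) (g : Fin n → ℝ → ℝ)
    (hcont : ∀ m, Continuous (g m))
    (hanti : ∀ m, Antitone (g m))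
    (hbdd : ∀ m, ∃ C : ℝ, ∀ s : ℝ, |g m s| ≤ C) :
    ∃! ψ : Fin n → ℝ, ∀ m, A.mulVec ψ m = g m (ψ m) + b m := by
  obtain ⟨ψ, hψ⟩ := PB_exists n hn A hA b g hcont hbdd
  exact ⟨ψ, hψ, fun y hy => PB_unique n A hA b g hanti y ψ hy hψ⟩
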